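/- arXiv:2501.10309 — 5 statements merged into one kernel-verified Lean document; each statement's English description precedes it below -/
import Mathlib

section
/- Let A and B be n×n positive definite real symmetric matrices, and let A_i and B_i denote the (n−1)×(n−1) matrices obtained from A and B by deleting the i-th row and i-th column. Then det(A+B)/det(A_i+B_i) ≥ det(A)/det(A_i) + det(B)/det(B_i). -/
open Matrix

noncomputable section

variable {n : ℕ}

/-- reindexing equivalence putting index `i` last -/
def bergEquiv (i : Fin (n+1)) : Fin n ⊕ Unit ≃ Fin (n+1) :=
  ((finSuccEquiv' i).trans (Equiv.optionEquivSumPUnit (Fin n))).symm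

@[simp] lemma bergEquiv_inl (i : Fin (n+1)) (j : Fin n) :
    bergEquiv i (Sum.inl j) = i.succAbove j := by
  simp [bergEquiv, Equiv.optionEquivSumPUnit]

@[simp] lemma bergEquiv_inr (i : Fin (n+1)) (u : Unit) :
    bergEquiv i (Sum.inr u) = i := by
  simp [bergEquiv, Equiv.optionEquivSumPUnit]

lemma dot_submatrix_equiv {m l : Type*} [Fintype m] [Fintype l] [DecidableEq m] [DecidableEq l]
    (M : Matrix l l ℝ) (e : m ≃ l) (x : m → ℝ) :
    x ⬝ᵥ (M.submatrix e e) *ᵥ x = (x ∘ e.symm) ⬝ᵥ M *ᵥ (x ∘ e.symm) := by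
  rw [submatrix_mulVec_equiv]
  simp only [dotProduct]
  rw [← Equiv.sum_comp e (fun k => (x ∘ e.symm) k * (M *ᵥ (x ∘ e.symm)) k)]
  simp

example : True := trivial

lemma bergstrom_aux (M : Matrix (Fin (n + 1)) (Fin (n + 1)) ℝ) (hM : M.PosDef)
    (i : Fin (n + 1)) :
    (∀ x : Fin (n + 1) → ℝ, x i = 1 →
      M.det / (M.submatrix i.succAbove i.succAbove).det ≤ x ⬝ᵥ M *ᵥ x) ∧
    ∃ x : Fin (n + 1) → ℝ, x i = 1 ∧
      x ⬝ᵥ M *ᵥ x = M.det / (M.submatrix i.succAbove i.succAbove).det := by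
  classical
  set e := bergEquiv i with he
  set M₁ : Matrix (Fin n) (Fin n) ℝ := M.submatrix i.succAbove i.succAbove with hM₁def
  set b : Matrix (Fin n) Unit ℝ := Matrix.of (fun j _ => M (i.succAbove j) i) with hbdef
  set d : Matrix Unit Unit ℝ := Matrix.of (fun _ _ => M i i) with hddef
  have hsymm : ∀ p q, M p q = M q p := fun p q => by
    have := congrFun (congrFun hM.1 p) q
    simpa using this.symm
  have hblock : M.submatrix e e = fromBlocks M₁ b bᴴ d := by
    ext p q
    cases p with
    | inl j => cases q with
      | inl k => simp [he, hM₁def]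
      | inr u => simp [he, hbdef]
    | inr u => cases q with
      | inl k => simp [he, hbdef, hsymm i (i.succAbove k)]
      | inr v => simp [he, hddef]
  have hMe : (M.submatrix e e).PosDef := by
    refine Matrix.PosDef.of_dotProduct_mulVec_pos (hM.1.submatrix e) (fun x hx => ?_)
    have hx' : x ∘ e.symm ≠ 0 := by
      intro h; apply hx; ext p
      have := congrFun h (e p); simpa using this
    have := hM.dotProduct_mulVec_pos hx'
    simp only [star_trivial] at this ⊢
    rw [dot_submatrix_equiv]
    exact this
  have hM₁ : M₁.PosDef := by
    refine Matrix.PosDef.of_dotProduct_mulVec_pos (hM.1.submatrix _) (fun y hy => ?_)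
    have h0 : (y ⊕ᵥ (0 : Unit → ℝ)) ≠ 0 := by
      intro h
      exact hy (by ext j; exact congrFun h (Sum.inl j))
    have := hMe.dotProduct_mulVec_pos h0
    rw [hblock] at this
    simpa [fromBlocks_mulVec, dotProduct] using this
  have hdet₁ : 0 < M₁.det := hM₁.det_pos
  haveI : Invertible M₁ := invertibleOfIsUnitDet _ hdet₁.ne'.isUnit
  set s : ℝ := (d - bᴴ * M₁⁻¹ * b) () () with hsdef
  have hdet : M.det = M₁.det * s := by
    have h1 : M.det = (M.submatrix e e).det := (det_submatrix_equiv_self e M).symm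
    rw [h1, hblock, det_fromBlocks₁₁]
    congr 1
    rw [invOf_eq_nonsing_inv, det_unique]
  have hs : M.det / M₁.det = s := by
    field_simp [hdet]
    exact hdet
  have key : ∀ u : Fin n → ℝ,
      (u ⊕ᵥ (fun _ => (1:ℝ))) ⬝ᵥ (M.submatrix e e) *ᵥ (u ⊕ᵥ (fun _ => (1:ℝ))) =
      (u + (M₁⁻¹ * b) *ᵥ (fun _ => (1:ℝ))) ⬝ᵥ M₁ *ᵥ (u + (M₁⁻¹ * b) *ᵥ (fun _ => (1:ℝ))) + s := by
    intro u
    have hschur := schur_complement_eq₁₁ (α := ℝ) b d u (fun _ => (1:ℝ)) hM₁.1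
    simp only [star_trivial] at hschur
    rw [hblock, dotProduct_mulVec, hschur]
    congr 1
    · rw [← dotProduct_mulVec]
    · simp [hsdef, vecMul, dotProduct]
  constructor
  · intro x hx
    have hxe : x ∘ e = (fun j => x (i.succAbove j)) ⊕ᵥ (fun _ => (1:ℝ)) := by
      ext p; cases p with
      | inl j => simp [he]
      | inr u => simp [he, hx]
    have hc : (x ∘ e) ∘ e.symm = x := by ext p; simp
    have h1 : x ⬝ᵥ M *ᵥ x = (x ∘ e) ⬝ᵥ (M.submatrix e e) *ᵥ (x ∘ e) := by
      rw [dot_submatrix_equiv, hc]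
    rw [h1, hxe, key, hs]
    have hps := hM₁.posSemidef.dotProduct_mulVec_nonneg ((fun j => x (i.succAbove j)) + (M₁⁻¹ * b) *ᵥ (fun _ => (1:ℝ)))
    simp only [star_trivial] at hps
    linarith
  · refine ⟨((-((M₁⁻¹ * b) *ᵥ (fun _ => (1:ℝ)))) ⊕ᵥ (fun _ => (1:ℝ))) ∘ e.symm, ?_, ?_⟩
    · show (_ ⊕ᵥ _) (e.symm i) = 1
      have h1 : e.symm i = Sum.inr () := by
        apply e.injective; simp [he]
      rw [h1]; rfl
    · rw [← dot_submatrix_equiv M e ((-((M₁⁻¹ * b) *ᵥ (fun _ => (1:ℝ)))) ⊕ᵥ (fun _ => (1:ℝ))),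
        key, hs]
      simp

end

/-- Bergström's inequality: for positive definite symmetric real matrices `A`, `B`,
deleting the `i`-th row and column (via `Fin.succAbove`),
`det(A+B)/det(A_i+B_i) ≥ det A / det A_i + det B / det B_i`. -/
theorem bergstrom_inequality (n : ℕ) (A B : Matrix (Fin (n + 1)) (Fin (n + 1)) ℝ)
    (hA : A.PosDef) (hB : B.PosDef) (hAs : A.IsSymm) (hBs : B.IsSymm) (i : Fin (n + 1)) :
    (A + B).det / (A.submatrix i.succAbove i.succAbove
        + B.submatrix i.succAbove i.succAbove).det
      ≥ A.det / (A.submatrix i.succAbove i.succAbove).det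
        + B.det / (B.submatrix i.succAbove i.succAbove).det := by
  obtain ⟨hmin, x, hx1, hx2⟩ := bergstrom_aux (A + B) (hA.add hB) i
  have hsub : (A + B).submatrix i.succAbove i.succAbove
      = A.submatrix i.succAbove i.succAbove + B.submatrix i.succAbove i.succAbove := by
    ext j k; simp
  rw [ge_iff_le, ← hsub, ← hx2]
  have hq : x ⬝ᵥ (A + B) *ᵥ x = x ⬝ᵥ A *ᵥ x + x ⬝ᵥ B *ᵥ x := by
    rw [Matrix.add_mulVec, dotProduct_add]
  have hAx := (bergstrom_aux A hA i).1 x hx1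
  have hBx := (bergstrom_aux B hB i).1 x hx1
  linarith
end

section
/- Bergström's inequality is equivalent to concavity of the map A ↦ det(A)/det(A_i) on positive definite matrices: for positive definite n×n matrices S, T and λ ∈ [0,1], det(λS+(1−λ)T)/det(λS_i + (1−λ)T_i) ≥ λ·det(S)/det(S_i) + (1−λ)·det(T)/det(T_i). -/
open Matrix

private lemma adj_diag {n : ℕ} (A : Matrix (Fin (n + 1)) (Fin (n + 1)) ℝ) (i : Fin (n + 1)) :
    A.adjugate i i = (A.submatrix i.succAbove i.succAbove).det := by
  rw [Matrix.adjugate_fin_succ_eq_det_submatrix]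
  have : (-1 : ℝ) ^ ((i : ℕ) + i) = 1 := Even.neg_one_pow ⟨i, rfl⟩
  rw [this, one_mul]

private lemma smul_posSemidef {m : Type*} [Fintype m] {A : Matrix m m ℝ} (hA : A.PosSemidef)
    {c : ℝ} (hc : 0 ≤ c) : (c • A).PosSemidef := by
  refine PosSemidef.of_dotProduct_mulVec_nonneg ?_ (fun x => ?_)
  · unfold Matrix.IsHermitian
    rw [conjTranspose_smul, hA.1]
    simp
  · rw [smul_mulVec, dotProduct_smul, smul_eq_mul]
    exact mul_nonneg hc (hA.dotProduct_mulVec_nonneg x)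

/-- For a positive definite `A`, the inverse diagonal entry times `det A` equals the minor. -/
private lemma minor_eq {n : ℕ} {A : Matrix (Fin (n + 1)) (Fin (n + 1)) ℝ} (hA : A.PosDef)
    (i : Fin (n + 1)) :
    (A.submatrix i.succAbove i.succAbove).det = A⁻¹ i i * A.det := by
  have hdet : A.det ≠ 0 := hA.det_pos.ne'
  rw [← adj_diag, Matrix.inv_def]
  rw [Matrix.smul_apply, smul_eq_mul, Ring.inverse_eq_inv]
  rw [mul_comm (A.det⁻¹) _, mul_assoc, inv_mul_cancel₀ hdet, mul_one]

private lemma inv_diag_pos {n : ℕ} {A : Matrix (Fin (n + 1)) (Fin (n + 1)) ℝ} (hA : A.PosDef)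
    (i : Fin (n + 1)) : 0 < A⁻¹ i i := by
  have h := hA.inv.dotProduct_mulVec_pos (x := (Pi.single i 1 : Fin (n + 1) → ℝ)) (by simp [Pi.single_eq_same, funext_iff]; exact ⟨i, by simp⟩)
  simpa [Matrix.mulVec_single, single_dotProduct] using h

/-- `det A / det A_i = (A⁻¹ i i)⁻¹`. -/
private lemma ratio_eq {n : ℕ} {A : Matrix (Fin (n + 1)) (Fin (n + 1)) ℝ} (hA : A.PosDef)
    (i : Fin (n + 1)) :
    A.det / (A.submatrix i.succAbove i.succAbove).det = (A⁻¹ i i)⁻¹ := by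
  rw [minor_eq hA i]
  have h1 : A.det ≠ 0 := hA.det_pos.ne'
  rw [mul_comm, div_mul_eq_div_div, div_self h1, one_div]

/-- The minimizer: `x = (A⁻¹ i i)⁻¹ • A⁻¹ *ᵥ e_i` satisfies `x i = 1`,
`A *ᵥ x = (A⁻¹ i i)⁻¹ • e_i`. -/
private lemma lower_bound {n : ℕ} {A : Matrix (Fin (n + 1)) (Fin (n + 1)) ℝ} (hA : A.PosDef)
    (i : Fin (n + 1)) (y : Fin (n + 1) → ℝ) (hy : y i = 1) :
    A.det / (A.submatrix i.succAbove i.succAbove).det ≤ y ⬝ᵥ A *ᵥ y := by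
  classical
  set d : ℝ := A⁻¹ i i with hd
  have hdpos : 0 < d := inv_diag_pos hA i
  have hdet : IsUnit A.det := isUnit_iff_ne_zero.2 hA.det_pos.ne'
  set e : Fin (n + 1) → ℝ := Pi.single i 1 with he
  set w : Fin (n + 1) → ℝ := A⁻¹ *ᵥ e with hw
  set x : Fin (n + 1) → ℝ := d⁻¹ • w with hx
  have hAx : A *ᵥ x = d⁻¹ • e := by
    rw [hx, hw, Matrix.mulVec_smul, Matrix.mulVec_mulVec, Matrix.mul_nonsing_inv A hdet,
      Matrix.one_mulVec]
  have hxi : x i = 1 := by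
    simp only [hx, hw, he, Pi.smul_apply, smul_eq_mul]
    rw [Matrix.mulVec_single]
    simp only [Pi.smul_apply, MulOpposite.op_one, one_smul, Matrix.col_apply]
    exact inv_mul_cancel₀ hdpos.ne'
  set z : Fin (n + 1) → ℝ := y - x with hz
  have hzi : z i = 0 := by simp [hz, hy, hxi]
  have hsymm : Aᵀ = A := by
    have := hA.1
    unfold Matrix.IsHermitian at this
    simpa using this
  have hzAx : z ⬝ᵥ (A *ᵥ x) = 0 := by
    rw [hAx, he, dotProduct_smul, dotProduct_single (v := z), hzi]
    simp
  have hxAz : x ⬝ᵥ (A *ᵥ z) = 0 := by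
    rw [dotProduct_mulVec, ← Matrix.mulVec_transpose, hsymm, dotProduct_comm]
    exact hzAx
  have hzAz : 0 ≤ z ⬝ᵥ (A *ᵥ z) := by
    have := hA.posSemidef.dotProduct_mulVec_nonneg z
    simpa using this
  have hxAx : x ⬝ᵥ (A *ᵥ x) = d⁻¹ := by
    rw [hAx, he, dotProduct_smul, dotProduct_single, hxi]
    simp
  have hyx : y = x + z := by simp [hz]
  have expand : y ⬝ᵥ (A *ᵥ y) = d⁻¹ + z ⬝ᵥ (A *ᵥ z) := by
    rw [hyx, Matrix.mulVec_add, dotProduct_add, add_dotProduct, add_dotProduct,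
      hxAx, hxAz, hzAx]
    ring
  rw [ratio_eq hA i, ← hd, expand]
  linarith

private lemma exists_min {n : ℕ} {A : Matrix (Fin (n + 1)) (Fin (n + 1)) ℝ} (hA : A.PosDef)
    (i : Fin (n + 1)) :
    ∃ y : Fin (n + 1) → ℝ, y i = 1 ∧
      y ⬝ᵥ A *ᵥ y = A.det / (A.submatrix i.succAbove i.succAbove).det := by
  classical
  set d : ℝ := A⁻¹ i i with hd
  have hdpos : 0 < d := inv_diag_pos hA i
  have hdet : IsUnit A.det := isUnit_iff_ne_zero.2 hA.det_pos.ne'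
  set e : Fin (n + 1) → ℝ := Pi.single i 1 with he
  set w : Fin (n + 1) → ℝ := A⁻¹ *ᵥ e with hw
  have hwi : (d⁻¹ • w) i = 1 := by
    simp only [hw, he, Pi.smul_apply, smul_eq_mul]
    rw [Matrix.mulVec_single]
    simp only [Pi.smul_apply, MulOpposite.op_one, one_smul, Matrix.col_apply]
    exact inv_mul_cancel₀ hdpos.ne'
  refine ⟨d⁻¹ • w, hwi, ?_⟩
  have hAx : A *ᵥ (d⁻¹ • w) = d⁻¹ • e := by
    rw [hw, Matrix.mulVec_smul, Matrix.mulVec_mulVec, Matrix.mul_nonsing_inv A hdet,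
      Matrix.one_mulVec]
  rw [hAx, he, dotProduct_smul, dotProduct_single, hwi, ratio_eq hA i, ← hd]
  simp

/-- Concavity form of Bergström's inequality: the map `A ↦ det A / det A_i` is concave
on positive definite symmetric matrices. -/
theorem bergstrom_concavity (n : ℕ) (S T : Matrix (Fin (n + 1)) (Fin (n + 1)) ℝ)
    (hS : S.PosDef) (hT : T.PosDef) (hSs : S.IsSymm) (hTs : T.IsSymm)
    (i : Fin (n + 1)) (lam : ℝ) (hlam0 : 0 ≤ lam) (hlam1 : lam ≤ 1) :
    (lam • S + (1 - lam) • T).det /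
        (lam • S.submatrix i.succAbove i.succAbove
          + (1 - lam) • T.submatrix i.succAbove i.succAbove).det
      ≥ lam * (S.det / (S.submatrix i.succAbove i.succAbove).det)
        + (1 - lam) * (T.det / (T.submatrix i.succAbove i.succAbove).det) := by
  classical
  set M : Matrix (Fin (n + 1)) (Fin (n + 1)) ℝ := lam • S + (1 - lam) • T with hM
  have hMsub : M.submatrix i.succAbove i.succAbove =
      lam • S.submatrix i.succAbove i.succAbove
        + (1 - lam) • T.submatrix i.succAbove i.succAbove := by
    ext a b
    simp [hM]
  have hMpd : M.PosDef := by
    rcases eq_or_lt_of_le hlam1 with h1 | h1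
    · have : M = S := by rw [hM, h1]; simp
      rw [this]; exact hS
    · have hTpd : ((1 - lam) • T).PosDef := by
        refine PosDef.of_dotProduct_mulVec_pos ?_ (fun x hx => ?_)
        · unfold Matrix.IsHermitian
          rw [conjTranspose_smul, hT.1]
          simp
        · rw [smul_mulVec, dotProduct_smul, smul_eq_mul]
          exact mul_pos (by linarith) (hT.dotProduct_mulVec_pos hx)
      exact Matrix.PosDef.posSemidef_add (smul_posSemidef hS.posSemidef hlam0) hTpd
  obtain ⟨y, hyi, hyM⟩ := exists_min hMpd i
  have hSy : S.det / (S.submatrix i.succAbove i.succAbove).det ≤ y ⬝ᵥ S *ᵥ y :=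
    lower_bound hS i y hyi
  have hTy : T.det / (T.submatrix i.succAbove i.succAbove).det ≤ y ⬝ᵥ T *ᵥ y :=
    lower_bound hT i y hyi
  have hsplit : y ⬝ᵥ M *ᵥ y = lam * (y ⬝ᵥ S *ᵥ y) + (1 - lam) * (y ⬝ᵥ T *ᵥ y) := by
    rw [hM, Matrix.add_mulVec, dotProduct_add, smul_mulVec, smul_mulVec,
      dotProduct_smul, dotProduct_smul]
    simp [smul_eq_mul]
  rw [ge_iff_le, ← hMsub, ← hyM, hsplit]
  have h1 : lam * (S.det / (S.submatrix i.succAbove i.succAbove).det) ≤ lam * (y ⬝ᵥ S *ᵥ y) :=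
    mul_le_mul_of_nonneg_left hSy hlam0
  have h2 : (1 - lam) * (T.det / (T.submatrix i.succAbove i.succAbove).det)
      ≤ (1 - lam) * (y ⬝ᵥ T *ᵥ y) :=
    mul_le_mul_of_nonneg_left hTy (by linarith)
  linarith
end

section
/- Ky Fan's inequality: Let A and B be n×n positive definite real symmetric matrices and, for 1 ≤ k ≤ n−1, let A_(k) and B_(k) denote the leading principal (n−k)×(n−k) submatrices. Then (det(A+B)/det(A_(k)+B_(k)))^{1/k} ≥ (det(A)/det(A_(k)))^{1/k} + (det(B)/det(B_(k)))^{1/k}. -/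
open Matrix Finset

namespace KyFanAux

lemma scalar_minkowski {k : ℕ} (hk : 1 ≤ k) (lam : Fin k → ℝ) (hlam : ∀ i, 0 ≤ lam i) :
    1 + (∏ i, lam i) ^ ((1:ℝ)/k) ≤ (∏ i, (1 + lam i)) ^ ((1:ℝ)/k) := by
  have hkpos : (0:ℝ) < k := by exact_mod_cast hk
  have h1 : ∀ i, (0:ℝ) < 1 + lam i := fun i => by linarith [hlam i]
  have hP : (0:ℝ) < ∏ i, (1 + lam i) := Finset.prod_pos (fun i _ => h1 i)
  set Q : ℝ := (∏ i, (1 + lam i)) ^ ((1:ℝ)/k) with hQ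
  have hQpos : 0 < Q := Real.rpow_pos_of_pos hP _
  rw [← div_le_one hQpos]
  have hw : ∀ i ∈ (univ : Finset (Fin k)), (0:ℝ) ≤ 1/(k:ℝ) := fun i _ => by positivity
  have hw1 : ∑ _i : Fin k, (1:ℝ)/(k:ℝ) = 1 := by
    rw [Finset.sum_const, Finset.card_univ, Fintype.card_fin, nsmul_eq_mul]
    field_simp
  have G1 := Real.geom_mean_le_arith_mean_weighted univ (fun _ => 1/(k:ℝ))
      (fun i => 1/(1 + lam i)) hw hw1 (fun i _ => div_nonneg one_pos.le (h1 i).le)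
  have G2 := Real.geom_mean_le_arith_mean_weighted univ (fun _ => 1/(k:ℝ))
      (fun i => lam i/(1 + lam i)) hw hw1 (fun i _ => div_nonneg (hlam i) (h1 i).le)
  have hsum : (∑ i, (1/(k:ℝ)) * (1/(1 + lam i))) + (∑ i, (1/(k:ℝ)) * (lam i/(1 + lam i))) = 1 := by
    rw [← Finset.sum_add_distrib]
    rw [Finset.sum_congr rfl (fun x _ => show (1/(k:ℝ)) * (1/(1 + lam x)) + (1/(k:ℝ)) * (lam x/(1 + lam x)) = 1/(k:ℝ) by
      have := (h1 x).ne'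
      field_simp)]
    exact hw1
  have e1 : (∏ i, (1/(1 + lam i)) ^ ((1:ℝ)/(k:ℝ))) = 1/Q := by
    rw [Real.finset_prod_rpow univ _ (fun i _ => div_nonneg one_pos.le (h1 i).le), hQ]
    rw [show (∏ i, 1/(1 + lam i)) = (∏ i, (1 + lam i))⁻¹ by
      rw [← Finset.prod_inv_distrib]; simp]
    rw [Real.inv_rpow hP.le]
    simp
  have e2 : (∏ i, (lam i/(1 + lam i)) ^ ((1:ℝ)/(k:ℝ))) = (∏ i, lam i) ^ ((1:ℝ)/(k:ℝ)) / Q := by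
    rw [Real.finset_prod_rpow univ _ (fun i _ => div_nonneg (hlam i) (h1 i).le), hQ,
      Finset.prod_div_distrib, Real.div_rpow (Finset.prod_nonneg fun i _ => hlam i) hP.le]
  calc (1 + (∏ i, lam i) ^ ((1:ℝ)/(k:ℝ))) / Q
      = 1/Q + (∏ i, lam i) ^ ((1:ℝ)/(k:ℝ)) / Q := by ring
    _ = (∏ i, (1/(1 + lam i)) ^ ((1:ℝ)/(k:ℝ))) + (∏ i, (lam i/(1 + lam i)) ^ ((1:ℝ)/(k:ℝ))) := by
        rw [e1, e2]
    _ ≤ (∑ i, (1/(k:ℝ)) * (1/(1 + lam i))) + (∑ i, (1/(k:ℝ)) * (lam i/(1 + lam i))) :=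
        add_le_add G1 G2
    _ = 1 := hsum

lemma det_one_add {k : ℕ} {C : Matrix (Fin k) (Fin k) ℝ} (hC : C.IsHermitian) :
    (1 + C).det = ∏ i, (1 + hC.eigenvalues i) := by
  have hU := (Matrix.mem_unitaryGroup_iff).mp (hC.eigenvectorUnitary).2
  conv_lhs => rw [hC.spectral_theorem, Unitary.conjStarAlgAut_apply]
  have : (1 : Matrix (Fin k) (Fin k) ℝ) =
      (hC.eigenvectorUnitary : Matrix (Fin k) (Fin k) ℝ) * 1 *
        (star (hC.eigenvectorUnitary : Matrix (Fin k) (Fin k) ℝ)) := by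
    rw [Matrix.mul_one, hU]
  rw [this]
  rw [← Matrix.add_mul, ← Matrix.mul_add]
  rw [Matrix.det_mul, Matrix.det_mul, mul_comm, ← mul_assoc, ← Matrix.det_mul,
    show (star (hC.eigenvectorUnitary : Matrix (Fin k) (Fin k) ℝ)) *
      (hC.eigenvectorUnitary : Matrix (Fin k) (Fin k) ℝ) = 1 from
      (Matrix.mem_unitaryGroup_iff').mp (hC.eigenvectorUnitary).2, Matrix.det_one, one_mul]
  rw [show (1 : Matrix (Fin k) (Fin k) ℝ) + diagonal (RCLike.ofReal ∘ hC.eigenvalues)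
      = diagonal (fun i => 1 + hC.eigenvalues i) by
    rw [← Matrix.diagonal_one, Matrix.diagonal_add]
    congr 1]
  rw [Matrix.det_diagonal]

lemma det_eq_prod_eigs {k : ℕ} {C : Matrix (Fin k) (Fin k) ℝ} (hC : C.IsHermitian) :
    C.det = ∏ i, hC.eigenvalues i := by
  simpa using hC.det_eq_prod_eigenvalues

lemma posDef_of_det_ne_zero {k : ℕ} {S : Matrix (Fin k) (Fin k) ℝ} (hS : S.PosSemidef)
    (hdet : S.det ≠ 0) : S.PosDef := by
  refine Matrix.PosDef.of_dotProduct_mulVec_pos hS.1 (fun x hx => ?_)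
  rcases (hS.dotProduct_mulVec_nonneg x).lt_or_eq with h | h
  · exact h
  · exfalso
    have h0 : S *ᵥ x = 0 := (hS.dotProduct_mulVec_zero_iff x).mp h.symm
    apply hx
    have := congrArg (fun v => S⁻¹ *ᵥ v) h0
    simpa [Matrix.mulVec_mulVec, Matrix.nonsing_inv_mul S (isUnit_iff_ne_zero.mpr hdet)] using this

lemma psd_det_nonneg {k : ℕ} {S : Matrix (Fin k) (Fin k) ℝ} (hS : S.PosSemidef) :
    0 ≤ S.det := by
  rw [det_eq_prod_eigs hS.1]
  exact Finset.prod_nonneg fun i _ => hS.eigenvalues_nonneg i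

lemma minkowski {k : ℕ} (hk : 1 ≤ k) {X Y : Matrix (Fin k) (Fin k) ℝ}
    (hX : X.PosDef) (hY : Y.PosSemidef) :
    X.det ^ ((1:ℝ)/k) + Y.det ^ ((1:ℝ)/k) ≤ (X + Y).det ^ ((1:ℝ)/k) := by
  obtain ⟨R, hRsq, hRpsd⟩ : ∃ R : Matrix (Fin k) (Fin k) ℝ, R * R = X ∧ R.PosSemidef := by
    open MatrixOrder in
    exact ⟨CFC.sqrt X, CFC.sqrt_mul_sqrt_self X hX.posSemidef.nonneg, (CFC.sqrt_nonneg X).posSemidef⟩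
  have hdetX : 0 < X.det := hX.det_pos
  have hdetR : 0 < R.det := by
    have h2 : R.det * R.det = X.det := by rw [← Matrix.det_mul, hRsq]
    rcases (psd_det_nonneg hRpsd).lt_or_eq with h | h
    · exact h
    · exfalso; rw [← h] at h2; simp at h2; exact hdetX.ne' (by linarith)
  have hRu : IsUnit R.det := isUnit_iff_ne_zero.mpr hdetR.ne'
  have hRinv : R⁻¹.IsHermitian := hRpsd.1.inv
  obtain ⟨C, hC⟩ : ∃ C, C = R⁻¹ * Y * R⁻¹ := ⟨_, rfl⟩
  have hCpsd : C.PosSemidef := by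
    have := hY.conjTranspose_mul_mul_same R⁻¹
    rw [hC]
    rwa [hRinv.eq] at this
  have hYRC : Y = R * C * R := by
    rw [hC]
    rw [Matrix.mul_assoc, Matrix.mul_assoc, Matrix.nonsing_inv_mul R hRu, Matrix.mul_one,
      ← Matrix.mul_assoc, Matrix.mul_nonsing_inv R hRu, Matrix.one_mul]
  have hXY : X + Y = R * (1 + C) * R := by
    rw [Matrix.mul_add, Matrix.add_mul, Matrix.mul_one, hRsq, ← hYRC]
  have hdetY : Y.det = X.det * C.det := by
    rw [hYRC, Matrix.det_mul, Matrix.det_mul, ← hRsq, Matrix.det_mul]; ring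
  have hdetXY : (X + Y).det = X.det * (1 + C).det := by
    rw [hXY, Matrix.det_mul, Matrix.det_mul, ← hRsq, Matrix.det_mul]; ring
  have hdet1C : (1 + C).det = ∏ i, (1 + hCpsd.1.eigenvalues i) := det_one_add hCpsd.1
  have hdetC : C.det = ∏ i, hCpsd.1.eigenvalues i := det_eq_prod_eigs hCpsd.1
  have key := scalar_minkowski hk hCpsd.1.eigenvalues (fun i => hCpsd.eigenvalues_nonneg i)
  rw [← hdet1C, ← hdetC] at key
  calc X.det ^ ((1:ℝ)/k) + Y.det ^ ((1:ℝ)/k)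
      = X.det ^ ((1:ℝ)/k) * (1 + C.det ^ ((1:ℝ)/k)) := by
        rw [hdetY, Real.mul_rpow hdetX.le (psd_det_nonneg hCpsd)]; ring
    _ ≤ X.det ^ ((1:ℝ)/k) * (1 + C).det ^ ((1:ℝ)/k) := by
        apply mul_le_mul_of_nonneg_left key (Real.rpow_nonneg hdetX.le _)
    _ = (X + Y).det ^ ((1:ℝ)/k) := by
        rw [hdetXY, Real.mul_rpow hdetX.le]
        rw [hdet1C]
        exact Finset.prod_nonneg fun i _ => by
          linarith [hCpsd.eigenvalues_nonneg i]

lemma posDef_submatrix {ι n : Type*} [Fintype ι] [Fintype n] [DecidableEq ι] [DecidableEq n]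
    {M : Matrix n n ℝ} (hM : M.PosDef)
    {e : ι → n} (he : Function.Injective e) :
    (M.submatrix e e).PosDef := by
  refine Matrix.PosDef.of_dotProduct_mulVec_pos ?_ (fun x hx => ?_)
  · have := hM.1
    simpa [Matrix.IsHermitian, ← Matrix.conjTranspose_submatrix] using
      congrArg (fun N => N.submatrix e e) this
  · set x' : n → ℝ := fun p => ∑ i, if e i = p then x i else 0 with hx'
    have hxe : ∀ i, x' (e i) = x i := by
      intro i
      simp only [hx']
      rw [Finset.sum_eq_single i]
      · simp
      · intro j _ hj; simp [he.ne hj]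
      · simp
    have hx'ne : x' ≠ 0 := by
      obtain ⟨i, hi⟩ := Function.ne_iff.mp hx
      intro h
      apply hi
      have := congrFun h (e i)
      simpa [hxe i] using this
    have hMx : ∀ p, (M *ᵥ x') p = ∑ j, M p (e j) * x j := by
      intro p
      simp only [Matrix.mulVec, dotProduct, hx', Finset.mul_sum, mul_ite, mul_zero]
      rw [Finset.sum_comm]
      exact Finset.sum_congr rfl fun j _ => by simp [Finset.sum_ite_eq]
    have hquad : (star x') ⬝ᵥ (M *ᵥ x') = (star x) ⬝ᵥ ((M.submatrix e e) *ᵥ x) := by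
      calc (star x') ⬝ᵥ (M *ᵥ x')
          = ∑ p, x' p * ∑ j, M p (e j) * x j := by
            simp only [star_trivial, dotProduct]
            exact Finset.sum_congr rfl fun p _ => by rw [hMx p]
        _ = ∑ j, ∑ p, x' p * (M p (e j) * x j) := by
            simp only [Finset.mul_sum]
            exact Finset.sum_comm
        _ = ∑ j, ∑ i, x i * (M (e i) (e j) * x j) := by
            refine Finset.sum_congr rfl fun j _ => ?_
            simp only [hx', Finset.sum_mul, ite_mul, zero_mul]
            rw [Finset.sum_comm]
            exact Finset.sum_congr rfl fun i _ => by simp [Finset.sum_ite_eq]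
        _ = (star x) ⬝ᵥ ((M.submatrix e e) *ᵥ x) := by
            simp only [star_trivial, dotProduct, Matrix.mulVec, Matrix.submatrix_apply,
              Finset.mul_sum]
            exact Finset.sum_comm
    have := hM.dotProduct_mulVec_pos hx'ne
    rw [hquad] at this
    exact this

lemma schur_superadd {m k : ℕ} {A₁ A₂ : Matrix (Fin m) (Fin m) ℝ}
    (B₁ B₂ : Matrix (Fin m) (Fin k) ℝ) {D₁ D₂ : Matrix (Fin k) (Fin k) ℝ}
    (hA₁ : A₁.PosDef) (hA₂ : A₂.PosDef) (hD₁ : D₁.IsHermitian) (hD₂ : D₂.IsHermitian) :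
    (((D₁ + D₂) - (B₁ + B₂)ᴴ * (A₁ + A₂)⁻¹ * (B₁ + B₂))
      - ((D₁ - B₁ᴴ * A₁⁻¹ * B₁) + (D₂ - B₂ᴴ * A₂⁻¹ * B₂))).PosSemidef := by
  have hA₁₂ : (A₁ + A₂).PosDef := hA₁.add hA₂
  haveI : Invertible A₁ := Matrix.invertibleOfIsUnitDet _ (isUnit_iff_ne_zero.mpr hA₁.det_pos.ne')
  haveI : Invertible A₂ := Matrix.invertibleOfIsUnitDet _ (isUnit_iff_ne_zero.mpr hA₂.det_pos.ne')
  haveI : Invertible (A₁ + A₂) :=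
    Matrix.invertibleOfIsUnitDet _ (isUnit_iff_ne_zero.mpr hA₁₂.det_pos.ne')
  refine Matrix.PosSemidef.of_dotProduct_mulVec_nonneg ?_ ?_
  · refine IsHermitian.sub ?_ (IsHermitian.add ?_ ?_)
    · exact (hD₁.add hD₂).sub (isHermitian_conjTranspose_mul_mul _ hA₁₂.1.inv)
    · exact hD₁.sub (isHermitian_conjTranspose_mul_mul _ hA₁.1.inv)
    · exact hD₂.sub (isHermitian_conjTranspose_mul_mul _ hA₂.1.inv)
  · intro y
    set x₀ : Fin m → ℝ := -(((A₁ + A₂)⁻¹ * (B₁ + B₂)) *ᵥ y) with hx₀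
    have E12 := schur_complement_eq₁₁ (B₁ + B₂) (D₁ + D₂) x₀ y hA₁₂.1
    have E1 := schur_complement_eq₁₁ B₁ D₁ x₀ y hA₁.1
    have E2 := schur_complement_eq₁₁ B₂ D₂ x₀ y hA₂.1
    rw [hx₀, neg_add_cancel] at E12
    simp only [star_zero, zero_vecMul, zero_dotProduct, zero_add] at E12
    have hsplit : (fromBlocks (A₁ + A₂) (B₁ + B₂) (B₁ + B₂)ᴴ (D₁ + D₂))
        = fromBlocks A₁ B₁ B₁ᴴ D₁ + fromBlocks A₂ B₂ B₂ᴴ D₂ := by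
      rw [conjTranspose_add, fromBlocks_add]
    rw [hsplit] at E12
    have hq : ∀ (N : Matrix (Fin m) (Fin m) ℝ) (P : Matrix (Fin m) (Fin k) ℝ)
        (Q : Matrix (Fin k) (Fin k) ℝ) (z : Fin m → ℝ),
        True := fun _ _ _ _ => trivial
    have hsum : (star (x₀ ⊕ᵥ y)) ᵥ* (fromBlocks A₁ B₁ B₁ᴴ D₁ + fromBlocks A₂ B₂ B₂ᴴ D₂)
          ⬝ᵥ (x₀ ⊕ᵥ y)
        = (star (x₀ ⊕ᵥ y)) ᵥ* (fromBlocks A₁ B₁ B₁ᴴ D₁) ⬝ᵥ (x₀ ⊕ᵥ y)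
          + (star (x₀ ⊕ᵥ y)) ᵥ* (fromBlocks A₂ B₂ B₂ᴴ D₂) ⬝ᵥ (x₀ ⊕ᵥ y) := by
      rw [Matrix.vecMul_add, add_dotProduct]
    have hpos1 : 0 ≤ (star (x₀ + (A₁⁻¹ * B₁) *ᵥ y)) ᵥ* A₁ ⬝ᵥ (x₀ + (A₁⁻¹ * B₁) *ᵥ y) := by
      rw [← Matrix.dotProduct_mulVec]
      exact hA₁.posSemidef.dotProduct_mulVec_nonneg _
    have hpos2 : 0 ≤ (star (x₀ + (A₂⁻¹ * B₂) *ᵥ y)) ᵥ* A₂ ⬝ᵥ (x₀ + (A₂⁻¹ * B₂) *ᵥ y) := by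
      rw [← Matrix.dotProduct_mulVec]
      exact hA₂.posSemidef.dotProduct_mulVec_nonneg _
    have key : (star y) ᵥ* ((D₁ - B₁ᴴ * A₁⁻¹ * B₁)) ⬝ᵥ y
          + (star y) ᵥ* ((D₂ - B₂ᴴ * A₂⁻¹ * B₂)) ⬝ᵥ y
        ≤ (star y) ᵥ* ((D₁ + D₂) - (B₁ + B₂)ᴴ * (A₁ + A₂)⁻¹ * (B₁ + B₂)) ⬝ᵥ y := by
      rw [← E12, hsum, E1, E2]
      linarith
    rw [Matrix.dotProduct_mulVec, Matrix.vecMul_sub, Matrix.vecMul_add, sub_dotProduct,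
      add_dotProduct]
    linarith

end KyFanAux

open KyFanAux

/-- Ky Fan's inequality: for positive definite symmetric `n × n` real matrices `A`, `B`
and `1 ≤ k ≤ n - 1`, with `A_(k)` the leading principal `(n-k) × (n-k)` submatrix,
`(det(A+B)/det(A_(k)+B_(k)))^(1/k) ≥ (det A / det A_(k))^(1/k) + (det B / det B_(k))^(1/k)`. -/
theorem ky_fan_inequality (n k : ℕ) (hk1 : 1 ≤ k) (hkn : k ≤ n - 1)
    (A B : Matrix (Fin n) (Fin n) ℝ)
    (hA : A.PosDef) (hB : B.PosDef) (hAs : A.IsSymm) (hBs : B.IsSymm) :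
    ((A + B).det / ((A.submatrix (Fin.castLE (Nat.sub_le n k)) (Fin.castLE (Nat.sub_le n k))
          + B.submatrix (Fin.castLE (Nat.sub_le n k)) (Fin.castLE (Nat.sub_le n k))).det))
        ^ ((1 : ℝ) / k)
      ≥ (A.det / (A.submatrix (Fin.castLE (Nat.sub_le n k))
            (Fin.castLE (Nat.sub_le n k))).det) ^ ((1 : ℝ) / k)
        + (B.det / (B.submatrix (Fin.castLE (Nat.sub_le n k))
            (Fin.castLE (Nat.sub_le n k))).det) ^ ((1 : ℝ) / k) := by
  have hkn' : k ≤ n := le_trans hkn (Nat.sub_le n 1)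
  have hn1 : 1 ≤ n := le_trans hk1 hkn'
  have hmk : (n - k) + k = n := Nat.sub_add_cancel hkn'
  set e : (Fin (n - k) ⊕ Fin k) ≃ Fin n := finSumFinEquiv.trans (finCongr hmk) with he
  set g : Fin (n - k) → Fin n := Fin.castLE (Nat.sub_le n k) with hgdef
  set h : Fin k → Fin n := fun j => e (Sum.inr j) with hhdef
  have hinl : ∀ i, e (Sum.inl i) = g i := by
    intro i
    apply Fin.ext
    simp [he, hgdef]
  have hblocks : ∀ (M : Matrix (Fin n) (Fin n) ℝ), M.IsHermitian →
      M.submatrix e e = fromBlocks (M.submatrix g g) (M.submatrix g h)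
        ((M.submatrix g h))ᴴ (M.submatrix h h) := by
    intro M hM
    ext p q
    cases p with
    | inl i =>
      cases q with
      | inl j => simp [fromBlocks, hinl]
      | inr j => simp [fromBlocks, hinl, hhdef]
    | inr i =>
      cases q with
      | inl j =>
        simp only [Matrix.submatrix_apply, fromBlocks_apply₂₁, Matrix.conjTranspose_apply,
          Matrix.submatrix_apply, star_trivial, hinl, hhdef]
        exact (hM.apply _ _).symm
      | inr j => simp [fromBlocks, hhdef]
  have pack : ∀ (M : Matrix (Fin n) (Fin n) ℝ), M.PosDef →
      ((M.submatrix h h - (M.submatrix g h)ᴴ * (M.submatrix g g)⁻¹ * (M.submatrix g h)).PosDef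
       ∧ M.det = (M.submatrix g g).det *
          (M.submatrix h h - (M.submatrix g h)ᴴ * (M.submatrix g g)⁻¹ * (M.submatrix g h)).det) := by
    intro M hM
    have hX : (M.submatrix g g).PosDef := posDef_submatrix hM (Fin.castLE_injective _)
    haveI : Invertible (M.submatrix g g) :=
      Matrix.invertibleOfIsUnitDet _ (isUnit_iff_ne_zero.mpr hX.det_pos.ne')
    have hdet : M.det = (M.submatrix g g).det *
        (M.submatrix h h - (M.submatrix g h)ᴴ * (M.submatrix g g)⁻¹ * (M.submatrix g h)).det := by
      rw [← Matrix.det_submatrix_equiv_self e, hblocks M hM.1, Matrix.det_fromBlocks₁₁,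
        Matrix.invOf_eq_nonsing_inv]
    have hpsd : (M.submatrix h h - (M.submatrix g h)ᴴ * (M.submatrix g g)⁻¹
        * (M.submatrix g h)).PosSemidef := by
      rw [← Matrix.PosDef.fromBlocks₁₁ _ _ hX, ← hblocks M hM.1]
      exact (posDef_submatrix hM e.injective).posSemidef
    have hdet0 : (M.submatrix h h - (M.submatrix g h)ᴴ * (M.submatrix g g)⁻¹
        * (M.submatrix g h)).det ≠ 0 := by
      intro h0
      have := hM.det_pos
      rw [hdet, h0, mul_zero] at this
      exact lt_irrefl _ this
    exact ⟨posDef_of_det_ne_zero hpsd hdet0, hdet⟩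
  obtain ⟨hSA, hdetA⟩ := pack A hA
  obtain ⟨hSB, hdetB⟩ := pack B hB
  obtain ⟨hSAB, hdetAB⟩ := pack (A + B) (hA.add hB)
  have hXA : (A.submatrix g g).PosDef := posDef_submatrix hA (Fin.castLE_injective _)
  have hXB : (B.submatrix g g).PosDef := posDef_submatrix hB (Fin.castLE_injective _)
  have hsub : ∀ (f1 : Fin (n-k) → Fin n) (f2 : Fin k → Fin n),
      (A + B).submatrix f1 f2 = A.submatrix f1 f2 + B.submatrix f1 f2 := by
    intro f1 f2; ext i j; simp
  have hsubg : (A + B).submatrix g g = A.submatrix g g + B.submatrix g g := by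
    ext i j; simp
  have hsubh : (A + B).submatrix h h = A.submatrix h h + B.submatrix h h := by
    ext i j; simp
  set SA := A.submatrix h h - (A.submatrix g h)ᴴ * (A.submatrix g g)⁻¹ * (A.submatrix g h) with hSAdef
  set SB := B.submatrix h h - (B.submatrix g h)ᴴ * (B.submatrix g g)⁻¹ * (B.submatrix g h) with hSBdef
  set SAB := (A+B).submatrix h h - ((A+B).submatrix g h)ᴴ * ((A+B).submatrix g g)⁻¹
      * ((A+B).submatrix g h) with hSABdef
  have hSABeq : SAB = (A.submatrix h h + B.submatrix h h)
      - (A.submatrix g h + B.submatrix g h)ᴴ * (A.submatrix g g + B.submatrix g g)⁻¹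
        * (A.submatrix g h + B.submatrix g h) := by
    rw [hSABdef, hsubg, hsubh, hsub g h]
  have hP : (SAB - (SA + SB)).PosSemidef := by
    rw [hSABeq]
    exact schur_superadd (A.submatrix g h) (B.submatrix g h) hXA hXB
      (hA.1.submatrix h) (hB.1.submatrix h)
  have hsplit : SA + SB + (SAB - (SA + SB)) = SAB := by abel
  have eA : A.det / (A.submatrix g g).det = SA.det := by
    rw [hdetA, mul_div_cancel_left₀ _ hXA.det_pos.ne']
  have eB : B.det / (B.submatrix g g).det = SB.det := by
    rw [hdetB, mul_div_cancel_left₀ _ hXB.det_pos.ne']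
  have hXAB : (A.submatrix g g + B.submatrix g g).PosDef := hXA.add hXB
  have eAB : (A + B).det / (A.submatrix g g + B.submatrix g g).det = SAB.det := by
    rw [hsubg] at hdetAB
    rw [hdetAB, mul_div_cancel_left₀ _ hXAB.det_pos.ne']
  rw [ge_iff_le, eA, eB, eAB]
  calc SA.det ^ ((1:ℝ)/k) + SB.det ^ ((1:ℝ)/k)
      ≤ (SA + SB).det ^ ((1:ℝ)/k) := minkowski hk1 hSA hSB.posSemidef
    _ ≤ (SA + SB).det ^ ((1:ℝ)/k) + (SAB - (SA + SB)).det ^ ((1:ℝ)/k) :=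
        le_add_of_nonneg_right (Real.rpow_nonneg (psd_det_nonneg hP) _)
    _ ≤ ((SA + SB) + (SAB - (SA + SB))).det ^ ((1:ℝ)/k) := minkowski hk1 (hSA.add hSB) hP
    _ = SAB.det ^ ((1:ℝ)/k) := by rw [hsplit]
end

section
/- If A and B are n×n positive definite real symmetric matrices such that det(A_i) = det(B_i) for some index i (where A_i denotes A with the i-th row and column deleted), then for all λ ∈ [0,1], det(λA + (1−λ)B) ≥ λ det(A) + (1−λ) det(B). -/
set_option linter.unusedSectionVars false

open Matrix Finset

namespace DetSuper

variable {m : Type*} [Fintype m] [DecidableEq m]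

lemma transpose_eq {M : Matrix m m ℝ} (h : M.IsHermitian) : Mᵀ = M := by
  ext a b
  simpa using (congrFun (congrFun h b) a).symm

lemma posDef_smul {M : Matrix m m ℝ} (hM : M.PosDef) {c : ℝ} (hc : 0 < c) :
    (c • M).PosDef := by
  refine posDef_iff_dotProduct_mulVec.mpr ⟨?_, fun x hx => ?_⟩
  · rw [IsHermitian, conjTranspose_smul, hM.1.eq]
    congr 1
  · rw [smul_mulVec, dotProduct_smul, smul_eq_mul]
    exact mul_pos hc (hM.dotProduct_mulVec_pos hx)

lemma posSemidef_smul {M : Matrix m m ℝ} (hM : M.PosSemidef) {c : ℝ} (hc : 0 ≤ c) :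
    (c • M).PosSemidef := by
  refine posSemidef_iff_dotProduct_mulVec.mpr ⟨?_, fun x => ?_⟩
  · rw [IsHermitian, conjTranspose_smul, hM.1.eq]
    congr 1
  · rw [smul_mulVec, dotProduct_smul, smul_eq_mul]
    exact mul_nonneg hc (hM.dotProduct_mulVec_nonneg x)

lemma posDef_convex {M N : Matrix m m ℝ} (hM : M.PosDef) (hN : N.PosDef)
    {l : ℝ} (h0 : 0 ≤ l) (h1 : l ≤ 1) : (l • M + (1 - l) • N).PosDef := by
  rcases eq_or_lt_of_le h0 with h | h
  · simp only [← h, zero_smul, sub_zero, one_smul, zero_add]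
    exact hN
  · exact (posDef_smul hM h).add_posSemidef
      (posSemidef_smul hN.posSemidef (by linarith))


lemma congr_posDef {Y P : Matrix m m ℝ} (hY : Y.PosDef) (hP : Pᵀ = P)
    (Q : Matrix m m ℝ) (hQP : Q * P = 1) : (P * Y * P).PosDef := by
  refine posDef_iff_dotProduct_mulVec.mpr ⟨?_, fun x hx => ?_⟩
  · have := isHermitian_conjTranspose_mul_mul P hY.1
    rwa [conjTranspose_eq_transpose_of_trivial, hP] at this
  · have hz : P *ᵥ x ≠ 0 := by
      intro h
      apply hx
      have := congrArg (Q *ᵥ ·) h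
      simpa [mulVec_mulVec, hQP] using this
    have := hY.dotProduct_mulVec_pos hz
    simp only [star_trivial] at this ⊢
    calc x ⬝ᵥ (P * Y * P) *ᵥ x = x ⬝ᵥ P *ᵥ (Y *ᵥ (P *ᵥ x)) := by
          simp [mulVec_mulVec, Matrix.mul_assoc]
      _ = (x ᵥ* P) ⬝ᵥ (Y *ᵥ (P *ᵥ x)) := by rw [dotProduct_mulVec]
      _ = (P *ᵥ x) ⬝ᵥ (Y *ᵥ (P *ᵥ x)) := by
          rw [show x ᵥ* P = P *ᵥ x from by conv_lhs => rw [← hP, vecMul_transpose]]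
      _ > 0 := this

open scoped MatrixOrder in
/-- log-concavity consequence: determinant of a convex combination of two
positive definite matrices with equal determinants is at least that determinant. -/
lemma det_convex_ge {X Y : Matrix m m ℝ} (hX : X.PosDef) (hY : Y.PosDef)
    (hdet : X.det = Y.det) {l : ℝ} (h0 : 0 ≤ l) (h1 : l ≤ 1) :
    X.det ≤ (l • X + (1 - l) • Y).det := by
  classical
  have hXps := hX.posSemidef
  set S := CFC.sqrt X with hSdef
  have hSps : S.PosSemidef := (CFC.sqrt_nonneg X).posSemidef
  have hSS : S * S = X := CFC.sqrt_mul_sqrt_self X hXps.nonneg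
  have hXdetpos := hX.det_pos
  have hdetSS : S.det * S.det = X.det := by rw [← det_mul, hSS]
  have hSdet : S.det ≠ 0 := by
    intro h
    rw [h, mul_zero] at hdetSS
    linarith
  have hS1 : S * S⁻¹ = 1 := mul_nonsing_inv _ (isUnit_iff_ne_zero.2 hSdet)
  have hS2 : S⁻¹ * S = 1 := nonsing_inv_mul _ (isUnit_iff_ne_zero.2 hSdet)
  have hSt : Sᵀ = S := transpose_eq hSps.1
  have hSit : (S⁻¹)ᵀ = S⁻¹ := by rw [transpose_nonsing_inv, hSt]
  set C := S⁻¹ * Y * S⁻¹ with hCdef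
  have hC : C.PosDef := congr_posDef hY hSit S hS1
  have hSCS : S * C * S = Y := by
    rw [hCdef]
    simp only [← Matrix.mul_assoc]
    rw [hS1, Matrix.one_mul, Matrix.mul_assoc, hS2, Matrix.mul_one]
  set T := l • (1 : Matrix m m ℝ) + (1 - l) • C with hTdef
  have key : l • X + (1 - l) • Y = S * T * S := by
    rw [hTdef, Matrix.mul_add, Matrix.add_mul, Matrix.mul_smul, Matrix.mul_smul,
      Matrix.smul_mul, Matrix.smul_mul, Matrix.mul_one, hSS, hSCS]
  -- eigen decomposition of C
  have hCh : C.IsHermitian := hC.1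
  set μ := hCh.eigenvalues with hμdef
  set U : Matrix m m ℝ := (hCh.eigenvectorUnitary : Matrix m m ℝ) with hUdef
  have hUU : U * star U = 1 := Matrix.mem_unitaryGroup_iff.mp hCh.eigenvectorUnitary.2
  have hspec : C = U * Matrix.diagonal μ * star U := by
    have h1 : (RCLike.ofReal ∘ μ : m → ℝ) = μ := by
      funext j; simp [RCLike.ofReal_real_eq_id]
    have := hCh.spectral_theorem
    rw [h1] at this
    exact this
  have hT2 : T = U * Matrix.diagonal (fun j => l + (1 - l) * μ j) * star U := by
    have hdiag : l • (1 : Matrix m m ℝ) + (1 - l) • Matrix.diagonal μ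
        = Matrix.diagonal (fun j => l + (1 - l) * μ j) := by
      ext a b
      by_cases h : a = b <;> simp [Matrix.diagonal_apply, Matrix.one_apply, h]
    rw [← hdiag, Matrix.mul_add, Matrix.add_mul, Matrix.mul_smul, Matrix.mul_smul,
      Matrix.smul_mul, Matrix.smul_mul, Matrix.mul_one, hUU, ← hspec, hTdef]
  have hdetU : U.det * (star U).det = 1 := by rw [← det_mul, hUU, det_one]
  have hdetT : T.det = ∏ j, (l + (1 - l) * μ j) := by
    rw [hT2, det_mul, det_mul, ← det_diagonal]
    linear_combination (Matrix.diagonal (fun j => l + (1 - l) * μ j)).det * hdetU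
  have hμpos : ∀ j, 0 < μ j := hC.eigenvalues_pos
  have hdetC : C.det = 1 := by
    rw [hCdef, det_mul, det_mul, det_nonsing_inv, ← hdet, ← hdetSS]
    rw [Ring.inverse_eq_inv']
    field_simp
  have hprodμ : ∏ j, μ j = 1 := by
    have := hCh.det_eq_prod_eigenvalues
    rw [hdetC] at this
    exact this.symm
  have key2 : (1 : ℝ) ≤ ∏ j, (l + (1 - l) * μ j) := by
    calc (1 : ℝ) = (∏ j, μ j) ^ (1 - l) := by rw [hprodμ, Real.one_rpow]
      _ = ∏ j, (μ j) ^ (1 - l) :=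
        (Real.finset_prod_rpow _ _ (fun j _ => (hμpos j).le) _).symm
      _ ≤ ∏ j, (l + (1 - l) * μ j) := by
        refine Finset.prod_le_prod (fun j _ => Real.rpow_nonneg (hμpos j).le _)
          (fun j _ => ?_)
        have := Real.geom_mean_le_arith_mean2_weighted h0 (by linarith : (0:ℝ) ≤ 1 - l)
          zero_le_one (hμpos j).le (by ring)
        simpa using this
  have hTdetge : (1 : ℝ) ≤ T.det := by rw [hdetT]; exact key2
  calc X.det = X.det * 1 := by ring
    _ ≤ X.det * T.det := by nlinarith
    _ = (l • X + (1 - l) • Y).det := by rw [key, det_mul, det_mul, ← hdetSS]; ring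


variable {n : ℕ}

lemma posDef_submatrix_succAbove {M : Matrix (Fin (n + 1)) (Fin (n + 1)) ℝ} (hM : M.PosDef)
    (i : Fin (n + 1)) : (M.submatrix i.succAbove i.succAbove).PosDef := by
  refine posDef_iff_dotProduct_mulVec.mpr ⟨hM.1.submatrix _, fun y hy => ?_⟩
  set x : Fin (n + 1) → ℝ := i.insertNth 0 y with hx
  have hxs : ∀ j, x (i.succAbove j) = y j := fun j => by simp [hx]
  have hxi : x i = 0 := by simp [hx]
  have hxne : x ≠ 0 := by
    intro h
    apply hy
    funext j
    have := congrFun h (i.succAbove j)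
    simpa [hxs] using this
  have hpos := hM.dotProduct_mulVec_pos hxne
  have hMv : ∀ a, (M *ᵥ x) (i.succAbove a) = ((M.submatrix i.succAbove i.succAbove) *ᵥ y) a := by
    intro a
    show ∑ l, M (i.succAbove a) l * x l = _
    rw [Fin.sum_univ_succAbove (fun l => M (i.succAbove a) l * x l) i]
    simp [hxi, hxs, mulVec, dotProduct]
  have hsum : x ⬝ᵥ M *ᵥ x = y ⬝ᵥ (M.submatrix i.succAbove i.succAbove) *ᵥ y := by
    rw [dotProduct, Fin.sum_univ_succAbove (fun k => x k * (M *ᵥ x) k) i]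
    simp [hxi, hxs, hMv, dotProduct]
  simp only [star_trivial] at hpos ⊢
  rw [← hsum]
  exact hpos

lemma schur_exists (M : Matrix (Fin (n + 1)) (Fin (n + 1)) ℝ) (hM : M.PosDef)
    (i : Fin (n + 1)) :
    ∃ x : Fin (n + 1) → ℝ, x i = 1 ∧
      M.det = (M.submatrix i.succAbove i.succAbove).det * (x ⬝ᵥ M *ᵥ x) ∧
      ∀ u : Fin (n + 1) → ℝ, u i = 1 →
        M.det ≤ (M.submatrix i.succAbove i.succAbove).det * (u ⬝ᵥ M *ᵥ u) := by
  classical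
  have hMt : Mᵀ = M := transpose_eq hM.1
  set N := M.submatrix i.succAbove i.succAbove with hN
  have hNpd : N.PosDef := posDef_submatrix_succAbove hM i
  have hNdet : N.det ≠ 0 := hNpd.det_pos.ne'
  set v : Fin n → ℝ := fun j => M (i.succAbove j) i with hv
  set w : Fin n → ℝ := -(N⁻¹ *ᵥ v) with hw
  set x : Fin (n + 1) → ℝ := i.insertNth 1 w with hx
  have hxi : x i = 1 := by simp [hx]
  have hxs : ∀ j, x (i.succAbove j) = w j := fun j => by simp [hx]
  set q : ℝ := M i i + v ⬝ᵥ w with hq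
  have hMsymm : ∀ k l, M k l = M l k := by
    intro k l
    exact congrFun (congrFun hMt l) k
  have hNw : N *ᵥ w = -v := by
    rw [hw, mulVec_neg, mulVec_mulVec, mul_nonsing_inv _ (isUnit_iff_ne_zero.2 hNdet),
      one_mulVec]
  have hMx : M *ᵥ x = Pi.single i q := by
    funext k
    rcases eq_or_ne k i with hk | hk
    · rw [hk]
      show ∑ l, M i l * x l = _
      rw [Fin.sum_univ_succAbove (fun l => M i l * x l) i, Pi.single_eq_same]
      simp only [hxi, hxs, mul_one]
      rw [hq, dotProduct]
      congr 1
      refine Finset.sum_congr rfl fun j _ => ?_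
      rw [hMsymm i (i.succAbove j)]
    · obtain ⟨a, rfl⟩ := Fin.exists_succAbove_eq hk
      show ∑ l, M (i.succAbove a) l * x l = _
      rw [Fin.sum_univ_succAbove (fun l => M (i.succAbove a) l * x l) i,
        Pi.single_eq_of_ne hk]
      simp only [hxi, hxs, mul_one]
      have : ∑ j, M (i.succAbove a) (i.succAbove j) * w j = (N *ᵥ w) a := rfl
      rw [this, hNw]
      simp [hv]
  have hxq : x ⬝ᵥ M *ᵥ x = q := by
    rw [hMx, dotProduct_single, hxi, one_mul]
  have hcr : M.cramer (M *ᵥ x) = M.det • x := by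
    rw [cramer_eq_adjugate_mulVec, mulVec_mulVec, adjugate_mul, smul_mulVec, one_mulVec]
  have hsingle : (Pi.single i q : Fin (n + 1) → ℝ)
      = q • (Pi.single i 1 : Fin (n + 1) → ℝ) := by
    funext j
    rcases eq_or_ne j i with rfl | hj
    · simp
    · simp [Pi.single_eq_of_ne hj]
  have hadj : M.adjugate i i = M.cramer (Pi.single i 1) i := by
    simp only [adjugate_def, of_apply, hMt]
  have h3 : M.cramer (Pi.single i 1) i = N.det := by
    rw [← hadj, adjugate_fin_succ_eq_det_submatrix]
    rw [Even.neg_one_pow ⟨(i : ℕ), rfl⟩, one_mul]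
  have hdetq : M.det = N.det * q := by
    have h1 := congrFun hcr i
    rw [hMx, hsingle, LinearMap.map_smul] at h1
    simp only [Pi.smul_apply, smul_eq_mul, hxi, mul_one] at h1
    rw [h3] at h1
    linarith [h1]
  refine ⟨x, hxi, by rw [hxq, ← hdetq], fun u hu => ?_⟩
  set d : Fin (n + 1) → ℝ := u - x with hd
  have hdi : d i = 0 := by simp [hd, hu, hxi]
  have hvm : x ᵥ* M = M *ᵥ x := by
    conv_lhs => rw [← hMt, vecMul_transpose]
  have hsplit : u ⬝ᵥ M *ᵥ u = q + d ⬝ᵥ M *ᵥ d := by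
    have hu' : u = x + d := by rw [hd]; abel
    rw [hu', mulVec_add, dotProduct_add, add_dotProduct, add_dotProduct, hxq]
    have h5 : d ⬝ᵥ M *ᵥ x = 0 := by rw [hMx, dotProduct_single, hdi, zero_mul]
    have h6 : x ⬝ᵥ M *ᵥ d = 0 := by
      rw [dotProduct_mulVec, hvm, hMx, single_dotProduct, hdi, mul_zero]
    rw [h5, h6]
    ring
  have hdd : 0 ≤ d ⬝ᵥ M *ᵥ d := by
    have := hM.posSemidef.dotProduct_mulVec_nonneg d
    simpa using this
  have hge : q ≤ u ⬝ᵥ M *ᵥ u := by rw [hsplit]; linarith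
  rw [hdetq]
  exact mul_le_mul_of_nonneg_left hge hNpd.det_pos.le

end DetSuper


/-- If the `i`-th deleted-row-and-column submatrices of two positive definite symmetric
matrices have equal determinants, then the determinant is superadditive along the segment:
`det(λA + (1-λ)B) ≥ λ det A + (1-λ) det B`. -/
theorem det_superadditive_of_eq_minor (n : ℕ) (A B : Matrix (Fin (n + 1)) (Fin (n + 1)) ℝ)
    (hA : A.PosDef) (hB : B.PosDef) (hAs : A.IsSymm) (hBs : B.IsSymm) (i : Fin (n + 1))
    (hminor : (A.submatrix i.succAbove i.succAbove).det
      = (B.submatrix i.succAbove i.succAbove).det)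
    (lam : ℝ) (hlam0 : 0 ≤ lam) (hlam1 : lam ≤ 1) :
    (lam • A + (1 - lam) • B).det ≥ lam * A.det + (1 - lam) * B.det := by
  classical
  set M := lam • A + (1 - lam) • B with hM
  have hMpd : M.PosDef := DetSuper.posDef_convex hA hB hlam0 hlam1
  obtain ⟨x, hxi, hexact, -⟩ := DetSuper.schur_exists M hMpd i
  obtain ⟨-, -, -, hlowA⟩ := DetSuper.schur_exists A hA i
  obtain ⟨-, -, -, hlowB⟩ := DetSuper.schur_exists B hB i
  have hlA := hlowA x hxi
  have hlB := hlowB x hxi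
  have hNM : M.submatrix i.succAbove i.succAbove
      = lam • (A.submatrix i.succAbove i.succAbove)
        + (1 - lam) • (B.submatrix i.succAbove i.succAbove) := by
    ext a b
    simp [hM]
  have hNApd := DetSuper.posDef_submatrix_succAbove hA i
  have hNBpd := DetSuper.posDef_submatrix_succAbove hB i
  have hdge : (A.submatrix i.succAbove i.succAbove).det
      ≤ (M.submatrix i.succAbove i.succAbove).det := by
    rw [hNM]
    exact DetSuper.det_convex_ge hNApd hNBpd hminor hlam0 hlam1
  have hq : x ⬝ᵥ M *ᵥ x = lam * (x ⬝ᵥ A *ᵥ x) + (1 - lam) * (x ⬝ᵥ B *ᵥ x) := by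
    simp [hM, add_mulVec, smul_mulVec, dotProduct_add, dotProduct_smul, smul_eq_mul]
  have hqnn : 0 ≤ x ⬝ᵥ M *ᵥ x := by simpa using hMpd.posSemidef.dotProduct_mulVec_nonneg x
  have h1 : (A.submatrix i.succAbove i.succAbove).det * (x ⬝ᵥ M *ᵥ x)
      ≤ (M.submatrix i.succAbove i.succAbove).det * (x ⬝ᵥ M *ᵥ x) :=
    mul_le_mul_of_nonneg_right hdge hqnn
  have h2 : lam * A.det
      ≤ lam * ((A.submatrix i.succAbove i.succAbove).det * (x ⬝ᵥ A *ᵥ x)) :=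
    mul_le_mul_of_nonneg_left hlA hlam0
  have h3 : (1 - lam) * B.det
      ≤ (1 - lam) * ((B.submatrix i.succAbove i.succAbove).det * (x ⬝ᵥ B *ᵥ x)) :=
    mul_le_mul_of_nonneg_left hlB (by linarith)
  have h4 : (A.submatrix i.succAbove i.succAbove).det * (x ⬝ᵥ M *ᵥ x)
      = lam * ((A.submatrix i.succAbove i.succAbove).det * (x ⬝ᵥ A *ᵥ x))
        + (1 - lam) * ((B.submatrix i.succAbove i.succAbove).det * (x ⬝ᵥ B *ᵥ x)) := by
    rw [hq, hminor]
    ring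
  rw [ge_iff_le]
  linarith [hexact, h1, h2, h3, h4]
end

section
/- Characterization of equality: Let Σ₁, Σ₂ be n×n positive definite symmetric matrices whose (n−1)×(n−1) leading principal submatrices are both equal to the identity matrix I_{n−1}. If det((1−λ)Σ₁ + λΣ₂) = (1−λ)det(Σ₁) + λ det(Σ₂) for some λ ∈ (0,1), then the off-diagonal entries of the last row (and column) of Σ₁ and Σ₂ agree, i.e., (Σ₁)_{in} = (Σ₂)_{in} for all i = 1,…,n−1. -/
lemma det_schur_id (n : ℕ) (S : Matrix (Fin (n + 1)) (Fin (n + 1)) ℝ)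
    (hId : ∀ i j : Fin n, S i.castSucc j.castSucc = if i = j then 1 else 0)
    (hs : S.IsSymm) :
    S.det = S (Fin.last n) (Fin.last n)
      - ∑ i : Fin n, (S i.castSucc (Fin.last n)) ^ 2 := by
  have hinr : ∀ j : Fin 1, Fin.natAdd n j = Fin.last n := by
    intro j
    ext
    simp [Fin.natAdd, Fin.last]
  have hsub : S.submatrix finSumFinEquiv finSumFinEquiv =
      Matrix.fromBlocks 1 (Matrix.of fun i (_ : Fin 1) => S i.castSucc (Fin.last n))
        (Matrix.of fun (_ : Fin 1) j => S (Fin.last n) j.castSucc)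
        (Matrix.of fun _ _ => S (Fin.last n) (Fin.last n)) := by
    ext i j
    cases i with
    | inl i =>
      cases j with
      | inl j =>
        simp only [Matrix.submatrix_apply, finSumFinEquiv_apply_left, Matrix.fromBlocks_apply₁₁]
        have := hId i j
        simp only [Fin.castSucc] at this
        rw [this]
        split <;> simp [Matrix.one_apply, *]
      | inr j =>
        simp [hinr j, Fin.castSucc]
    | inr i =>
      cases j with
      | inl j =>
        simp [hinr i, Fin.castSucc]
      | inr j =>
        simp [hinr i, hinr j]
  have hdet := Matrix.det_submatrix_equiv_self finSumFinEquiv S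
  rw [hsub, Matrix.det_fromBlocks_one₁₁] at hdet
  rw [← hdet, Matrix.det_fin_one]
  simp only [Matrix.sub_apply, Matrix.mul_apply, Matrix.of_apply]
  congr 1
  apply Finset.sum_congr rfl
  intro i _
  rw [hs.apply i.castSucc (Fin.last n)]
  ring

/-- Equality case: if `Σ₁`, `Σ₂` are positive definite symmetric matrices whose leading
principal `n × n` submatrices are the identity, and the determinant is additive along the
segment at some `λ ∈ (0,1)`, then the off-diagonal entries of the last column coincide. -/
theorem equality_case_last_column (n : ℕ)
    (S1 S2 : Matrix (Fin (n + 1)) (Fin (n + 1)) ℝ)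
    (h1 : S1.PosDef) (h2 : S2.PosDef) (h1s : S1.IsSymm) (h2s : S2.IsSymm)
    (hId1 : ∀ i j : Fin n, S1 i.castSucc j.castSucc = if i = j then 1 else 0)
    (hId2 : ∀ i j : Fin n, S2 i.castSucc j.castSucc = if i = j then 1 else 0)
    (lam : ℝ) (hlam0 : 0 < lam) (hlam1 : lam < 1)
    (heq : ((1 - lam) • S1 + lam • S2).det = (1 - lam) * S1.det + lam * S2.det) :
    ∀ i : Fin n, S1 i.castSucc (Fin.last n) = S2 i.castSucc (Fin.last n) := by
  set S : Matrix (Fin (n + 1)) (Fin (n + 1)) ℝ := (1 - lam) • S1 + lam • S2 with hS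
  have hIdS : ∀ i j : Fin n, S i.castSucc j.castSucc = if i = j then 1 else 0 := by
    intro i j
    simp only [hS, Matrix.add_apply, Matrix.smul_apply, hId1 i j, hId2 i j, smul_eq_mul]
    split <;> ring
  have hsS : S.IsSymm := by
    rw [Matrix.IsSymm]
    simp [hS, Matrix.transpose_add, Matrix.transpose_smul, h1s.eq, h2s.eq]
  have d1 := det_schur_id n S1 hId1 h1s
  have d2 := det_schur_id n S2 hId2 h2s
  have dS := det_schur_id n S hIdS hsS
  have hSentry : ∀ i : Fin n, S i.castSucc (Fin.last n) =
      (1 - lam) * S1 i.castSucc (Fin.last n) + lam * S2 i.castSucc (Fin.last n) := by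
    intro i; simp [hS]
  have hSll : S (Fin.last n) (Fin.last n) =
      (1 - lam) * S1 (Fin.last n) (Fin.last n) + lam * S2 (Fin.last n) (Fin.last n) := by
    simp [hS]
  rw [dS, d1, d2, hSll] at heq
  have hsum : ∑ i : Fin n, lam * (1 - lam) *
      (S1 i.castSucc (Fin.last n) - S2 i.castSucc (Fin.last n)) ^ 2 = 0 := by
    have hrw : ∑ i : Fin n, (S i.castSucc (Fin.last n)) ^ 2 =
        ∑ i : Fin n, ((1 - lam) * S1 i.castSucc (Fin.last n)
          + lam * S2 i.castSucc (Fin.last n)) ^ 2 := by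
      apply Finset.sum_congr rfl; intro i _; rw [hSentry i]
    rw [hrw] at heq
    have expand : ∀ i : Fin n, lam * (1 - lam) *
        (S1 i.castSucc (Fin.last n) - S2 i.castSucc (Fin.last n)) ^ 2 =
        ((1 - lam) * (S1 i.castSucc (Fin.last n)) ^ 2
          + lam * (S2 i.castSucc (Fin.last n)) ^ 2)
        - ((1 - lam) * S1 i.castSucc (Fin.last n)
          + lam * S2 i.castSucc (Fin.last n)) ^ 2 := by
      intro i; ring
    rw [Finset.sum_congr rfl (fun i _ => expand i), Finset.sum_sub_distrib,
      Finset.sum_add_distrib, ← Finset.mul_sum, ← Finset.mul_sum]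
    linarith [heq]
  have hterm : ∀ i : Fin n, i ∈ Finset.univ → (0:ℝ) ≤ lam * (1 - lam) *
      (S1 i.castSucc (Fin.last n) - S2 i.castSucc (Fin.last n)) ^ 2 := by
    intro i _
    have hp : (0:ℝ) < lam * (1 - lam) := by nlinarith
    positivity
  intro i
  have hz := (Finset.sum_eq_zero_iff_of_nonneg hterm).mp hsum i (Finset.mem_univ i)
  have hpos : (0:ℝ) < lam * (1 - lam) := by nlinarith
  have hsq : (S1 i.castSucc (Fin.last n) - S2 i.castSucc (Fin.last n)) ^ 2 = 0 := by
    rcases mul_eq_zero.mp hz with h | h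
    · exact absurd h (ne_of_gt hpos)
    · exact h
  have := pow_eq_zero_iff (n := 2) (by norm_num) |>.mp hsq
  linarith
end
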